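/- Let A be an n×n copositive matrix. Then A is irreducible with respect to the cone N_n of symmetric entry-wise nonnegative n×n matrices if and only if for every pair of indices i, j ∈ {1,…,n} there exists a minimal zero u of A such that (Au)_i = (Au)_j = 0 and u_i + u_j > 0. -/

import Mathlib

open Matrix

/-- A symmetric matrix `A` is copositive if `xᵀ A x ≥ 0` for all entrywise nonnegative `x`. -/
def Copositive {n : ℕ} (A : Matrix (Fin n) (Fin n) ℝ) : Prop :=
  A.IsSymm ∧ ∀ x : Fin n → ℝ, (∀ i, 0 ≤ x i) → 0 ≤ x ⬝ᵥ A.mulVec x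

/-- The support of a vector. -/
def Supp {ι : Type*} (u : ι → ℝ) : Set ι := {i | u i ≠ 0}

/-- A zero of a copositive matrix: a nonzero nonnegative vector `u` with `uᵀ A u = 0`. -/
def IsZeroOf {n : ℕ} (A : Matrix (Fin n) (Fin n) ℝ) (u : Fin n → ℝ) : Prop :=
  u ≠ 0 ∧ (∀ i, 0 ≤ u i) ∧ u ⬝ᵥ A.mulVec u = 0

/-- A minimal zero: a zero such that no zero has support strictly contained in its support. -/
def IsMinimalZeroOf {n : ℕ} (A : Matrix (Fin n) (Fin n) ℝ) (u : Fin n → ℝ) : Prop :=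
  IsZeroOf A u ∧ ¬ ∃ v, IsZeroOf A v ∧ Supp v ⊂ Supp u

/-- The principal submatrix of `A` with rows and columns in `I`. -/
def subMat {n : ℕ} (A : Matrix (Fin n) (Fin n) ℝ) (I : Finset (Fin n)) :
    Matrix {i // i ∈ I} {i // i ∈ I} ℝ :=
  A.submatrix Subtype.val Subtype.val

/-- The subvector of `u` with indices in `I`. -/
def subVec {n : ℕ} (u : Fin n → ℝ) (I : Finset (Fin n)) : {i // i ∈ I} → ℝ :=
  fun i => u i.val

/-- Irreducibility of a copositive matrix `A` with respect to a set `M` of matrices. -/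
def IrreducibleWrtSet {n : ℕ} (A : Matrix (Fin n) (Fin n) ℝ)
    (M : Set (Matrix (Fin n) (Fin n) ℝ)) : Prop :=
  ¬ ∃ γ : ℝ, 0 < γ ∧ ∃ B ∈ M, B ≠ 0 ∧ Copositive (A - γ • B)

/-- Irreducibility of a copositive matrix `A` with respect to a single matrix `M`. -/
def IrreducibleWrtMat {n : ℕ} (A M : Matrix (Fin n) (Fin n) ℝ) : Prop :=
  ¬ ∃ γ : ℝ, 0 < γ ∧ Copositive (A - γ • M)

/-- An extremal element of a cone `K` of vectors. -/
def IsExtremalIn {ι : Type*} (K : Set (ι → ℝ)) (u : ι → ℝ) : Prop :=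
  u ∈ K ∧ u ≠ 0 ∧ ∀ v w, v ∈ K → w ∈ K → u = v + w →
    (∃ a : ℝ, 0 ≤ a ∧ v = a • u) ∧ (∃ b : ℝ, 0 ≤ b ∧ w = b • u)

/-- The matrix with entries 1 at positions `(i,j)` and `(j,i)` and 0 elsewhere. -/
def Eij {n : ℕ} (i j : Fin n) : Matrix (Fin n) (Fin n) ℝ :=
  fun a b => if (a = i ∧ b = j) ∨ (a = j ∧ b = i) then 1 else 0


lemma Eij_nonneg {n : ℕ} {i j a b : Fin n} : 0 ≤ Eij i j a b := by
  unfold Eij; split <;> norm_num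

lemma Eij_isSymm {n : ℕ} {i j : Fin n} : (Eij i j).IsSymm := by
  unfold Matrix.IsSymm
  ext a b
  simp only [Eij, Matrix.transpose_apply]
  split_ifs with h1 h2 <;> first | rfl | tauto

lemma Eij_mulVec_same {n : ℕ} {i l : Fin n} {x : Fin n → ℝ} :
    (Eij i i *ᵥ x) l = if l = i then x i else 0 := by
  simp only [Eij, Matrix.mulVec, dotProduct, and_self_left, or_self, ite_mul, one_mul,
    zero_mul]
  rcases eq_or_ne l i with h | h <;> simp [h]

lemma Eij_mulVec_ne {n : ℕ} {i j l : Fin n} {x : Fin n → ℝ} (hij : i ≠ j) :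
    (Eij i j *ᵥ x) l = (if l = i then x j else 0) + (if l = j then x i else 0) := by
  simp only [Eij, Matrix.mulVec, dotProduct, ite_mul, one_mul, zero_mul]
  rcases eq_or_ne l i with h1 | h1 <;> rcases eq_or_ne l j with h2 | h2
  · exact absurd (h1.symm.trans h2) hij
  · simp [h1, h2, hij, Finset.sum_ite_eq']
  · simp [h1, h2, hij.symm, Finset.sum_ite_eq']
  · simp [h1, h2]

lemma Eij_bilin_ne {n : ℕ} {i j : Fin n} {x y : Fin n → ℝ} (hij : i ≠ j) :
    x ⬝ᵥ (Eij i j) *ᵥ y = x i * y j + x j * y i := by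
  simp only [dotProduct]
  rw [Finset.sum_congr rfl (fun l _ => by rw [Eij_mulVec_ne hij])]
  simp [mul_add, Finset.sum_add_distrib, Finset.sum_ite_eq', mul_ite]

lemma Eij_bilin_same {n : ℕ} {i : Fin n} {x y : Fin n → ℝ} :
    x ⬝ᵥ (Eij i i) *ᵥ y = x i * y i := by
  simp only [dotProduct]
  rw [Finset.sum_congr rfl (fun l _ => by rw [Eij_mulVec_same])]
  simp [mul_ite, Finset.sum_ite_eq']

variable {n : ℕ} {A : Matrix (Fin n) (Fin n) ℝ} {i j l : Fin n} {x y u : Fin n → ℝ} {s t : ℝ}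

lemma dot_symm (hA : A.IsSymm) (x y : Fin n → ℝ) : x ⬝ᵥ A *ᵥ y = y ⬝ᵥ A *ᵥ x := by
  rw [dotProduct_mulVec]; nth_rewrite 1 [← hA]
  rw [vecMul_transpose, dotProduct_comm]

lemma quad_expand (hA : A.IsSymm) (x y : Fin n → ℝ) (t : ℝ) :
    (x + t • y) ⬝ᵥ A *ᵥ (x + t • y) =
      x ⬝ᵥ A *ᵥ x + 2 * t * (x ⬝ᵥ A *ᵥ y) + t ^ 2 * (y ⬝ᵥ A *ᵥ y) := by
  have h := dot_symm hA y x
  simp only [mulVec_add, mulVec_smul, dotProduct_add, add_dotProduct, dotProduct_smul,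
    smul_dotProduct, smul_eq_mul]
  rw [h]; ring

lemma single_dot_mulVec : ((Pi.single l 1 : Fin n → ℝ)) ⬝ᵥ A *ᵥ x = (A *ᵥ x) l := by
  simp [dotProduct, Pi.single_apply, Finset.sum_ite_eq, ite_mul]

lemma single_quad : ((Pi.single l 1 : Fin n → ℝ)) ⬝ᵥ A *ᵥ (Pi.single l 1 : Fin n → ℝ) = A l l := by
  simp [dotProduct, mulVec_single, Pi.single_apply, Finset.sum_ite_eq]

lemma quad_line (hA : A.IsSymm) (u : Fin n → ℝ) (l : Fin n) (t : ℝ) :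
    (u + t • (Pi.single l 1 : Fin n → ℝ)) ⬝ᵥ A *ᵥ (u + t • (Pi.single l 1 : Fin n → ℝ)) =
      u ⬝ᵥ A *ᵥ u + 2 * t * (A *ᵥ u) l + t ^ 2 * A l l := by
  rw [quad_expand hA,
    show u ⬝ᵥ A *ᵥ (Pi.single l 1 : Fin n → ℝ) = (A *ᵥ u) l from by
      rw [dot_symm hA, single_dot_mulVec],
    single_quad]

lemma copos_diag (hA : Copositive A) (l : Fin n) : 0 ≤ A l l := by
  have h := hA.2 ((Pi.single l 1 : Fin n → ℝ)) (fun m => by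
    rcases eq_or_ne m l with h | h
    · subst h; simp
    · simp [Pi.single_apply, h])
  rwa [show A.mulVec ((Pi.single l 1 : Fin n → ℝ)) = A *ᵥ (Pi.single l 1 : Fin n → ℝ) from rfl, single_quad] at h

lemma line_nonneg (hun : ∀ m, 0 ≤ u m) (ht : -u l ≤ t) (m : Fin n) :
    0 ≤ (u + t • (Pi.single l 1 : Fin n → ℝ)) m := by
  rcases eq_or_ne m l with h | h
  · subst h
    simp only [Pi.add_apply, Pi.smul_apply, Pi.single_eq_same, smul_eq_mul, mul_one]
    linarith [hun m]
  · simp [Pi.single_apply, h, hun m]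

lemma zero_mulVec_nonneg (hA : Copositive A) (hun : ∀ m, 0 ≤ u m)
    (huq : u ⬝ᵥ A *ᵥ u = 0) (l : Fin n) : 0 ≤ (A *ᵥ u) l := by
  set a := (A *ᵥ u) l with ha
  have hb : 0 ≤ A l l := copos_diag hA l
  have key : ∀ t : ℝ, 0 ≤ t → 0 ≤ 2 * t * a + t ^ 2 * A l l := by
    intro t ht
    have h := hA.2 (u + t • (Pi.single l 1 : Fin n → ℝ)) (line_nonneg hun (by linarith [hun l]))
    rw [show A.mulVec (u + t • (Pi.single l 1 : Fin n → ℝ)) = A *ᵥ (u + t • (Pi.single l 1 : Fin n → ℝ)) from rfl,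
      quad_line hA.1, huq] at h
    linarith
  by_contra hcon
  push_neg at hcon
  rcases eq_or_lt_of_le hb with hb0 | hb0
  · have := key 1 zero_le_one; rw [← hb0] at this; nlinarith
  · have h1 := key (-a / A l l) (le_of_lt (div_pos (neg_pos.2 hcon) hb0))
    have hne : A l l ≠ 0 := ne_of_gt hb0
    have hval : 2 * (-a / A l l) * a + (-a / A l l) ^ 2 * A l l = -(a ^ 2 / A l l) := by
      field_simp; ring
    rw [hval] at h1
    have ha2 : 0 < a * a := mul_pos_of_neg_of_neg hcon hcon
    have : 0 < a ^ 2 / A l l := by rw [pow_two]; exact div_pos ha2 hb0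
    linarith

lemma zero_mulVec_supp (hA : Copositive A) (hun : ∀ m, 0 ≤ u m)
    (huq : u ⬝ᵥ A *ᵥ u = 0) (hl : u l ≠ 0) : (A *ᵥ u) l = 0 := by
  have ha := zero_mulVec_nonneg hA hun huq l
  set a := (A *ᵥ u) l with hadef
  have hb : 0 ≤ A l l := copos_diag hA l
  have hul : 0 < u l := lt_of_le_of_ne (hun l) (Ne.symm hl)
  rcases eq_or_lt_of_le ha with h | h
  · exact h.symm
  · exfalso
    set s := min (u l) (a / (A l l + 1)) with hs
    have hs0 : 0 < s := lt_min hul (by positivity)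
    have hsu : s ≤ u l := min_le_left _ _
    have hsb : s ≤ a / (A l l + 1) := min_le_right _ _
    have key : 0 ≤ 2 * (-s) * a + (-s) ^ 2 * A l l := by
      have h2 := hA.2 (u + (-s) • (Pi.single l 1 : Fin n → ℝ)) (line_nonneg hun (by linarith))
      rw [show A.mulVec (u + (-s) • (Pi.single l 1 : Fin n → ℝ)) = A *ᵥ (u + (-s) • (Pi.single l 1 : Fin n → ℝ))
        from rfl, quad_line hA.1, huq] at h2
      linarith
    have hsb' : s * (A l l + 1) ≤ a := by
      rw [← le_div_iff₀ (by positivity)]; exact hsb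
    have h3 : s * (s * (A l l + 1)) ≤ s * a := mul_le_mul_of_nonneg_left hsb' hs0.le
    nlinarith [mul_pos hs0 h, sq_nonneg s]

/-- The simplex supported on `T`. -/
def Del {n : ℕ} (T : Finset (Fin n)) : Set (Fin n → ℝ) :=
  {x | (∀ l, 0 ≤ x l) ∧ (∀ l, l ∉ T → x l = 0) ∧ ∑ l, x l = 1}

lemma Del_le_one {T : Finset (Fin n)} (hx : x ∈ Del T) (l : Fin n) : x l ≤ 1 := by
  rcases hx with ⟨h1, _, h3⟩
  calc x l ≤ ∑ m, x m := Finset.single_le_sum (fun m _ => h1 m) (Finset.mem_univ l)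
  _ = 1 := h3


lemma isClosed_Del (T : Finset (Fin n)) : IsClosed (Del T) := by
  have e : Del T
      = (⋂ l, {x : Fin n → ℝ | 0 ≤ x l}) ∩
        ((⋂ l ∈ {l | l ∉ T}, {x : Fin n → ℝ | x l = 0}) ∩ {x : Fin n → ℝ | ∑ l, x l = 1}) := by
    ext x; simp [Del, Set.mem_iInter, Set.mem_setOf_eq]
  rw [e]
  refine (isClosed_iInter fun l => isClosed_le continuous_const (continuous_apply l)).inter
    (IsClosed.inter (isClosed_biInter fun l _ => isClosed_eq (continuous_apply l) continuous_const)
      (isClosed_eq (by exact continuous_finset_sum _ fun l _ => continuous_apply l)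
        continuous_const))

lemma isCompact_Del (T : Finset (Fin n)) : IsCompact (Del T) := by
  refine IsCompact.of_isClosed_subset (isCompact_Icc (a := (0 : Fin n → ℝ)) (b := 1))
    (isClosed_Del T) ?_
  intro x hx
  exact ⟨fun l => hx.1 l, fun l => Del_le_one hx l⟩

lemma cont_quad (B : Matrix (Fin n) (Fin n) ℝ) : Continuous fun x : Fin n → ℝ => x ⬝ᵥ B *ᵥ x := by
  simp only [dotProduct, mulVec]
  exact continuous_finset_sum _ fun l _ => (continuous_apply l).mul
    (continuous_finset_sum _ fun m _ => continuous_const.mul (continuous_apply m))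

lemma cont_mulVec (B : Matrix (Fin n) (Fin n) ℝ) (l : Fin n) :
    Continuous fun x : Fin n → ℝ => (B *ᵥ x) l := by
  simp only [mulVec, dotProduct]
  exact continuous_finset_sum _ fun m _ => continuous_const.mul (continuous_apply m)

lemma cont_psum (s : Finset (Fin n)) : Continuous fun x : Fin n → ℝ => ∑ l ∈ s, x l :=
  continuous_finset_sum _ fun l _ => continuous_apply l

/-- First-order condition at a minimizer of a symmetric quadratic form on `Del T`. -/
lemma min_first_order {B : Matrix (Fin n) (Fin n) ℝ} {T : Finset (Fin n)}
    (hB : B.IsSymm) {x : Fin n → ℝ} (hx : x ∈ Del T)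
    (hmin : ∀ y ∈ Del T, x ⬝ᵥ B *ᵥ x ≤ y ⬝ᵥ B *ᵥ y)
    {j : Fin n} (hj : j ∈ T) (hxj : 0 < x j) :
    (B *ᵥ x) j ≤ x ⬝ᵥ B *ᵥ x := by
  by_contra hcon
  push_neg at hcon
  set q := x ⬝ᵥ B *ᵥ x with hq
  set β := (B *ᵥ x) j with hβ
  set z := (Pi.single j 1 : Fin n → ℝ) - x with hz
  set M := z ⬝ᵥ B *ᵥ z with hM
  set s := min (x j) ((β - q) / (1 + |M|)) with hs
  have hd : (0:ℝ) < 1 + |M| := by positivity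
  have hs0 : 0 < s := lt_min hxj (div_pos (by linarith) hd)
  have hsx : s ≤ x j := min_le_left _ _
  have hsb : s * (1 + |M|) ≤ β - q := by
    rw [← le_div_iff₀ hd]; exact min_le_right _ _
  set y := x + (-s) • z with hy
  have hyD : y ∈ Del T := by
    refine ⟨?_, ?_, ?_⟩
    · intro l
      rcases eq_or_ne l j with h | h
      · subst h
        simp only [hy, hz, Pi.add_apply, Pi.smul_apply, Pi.sub_apply, Pi.single_eq_same,
          smul_eq_mul]
        nlinarith [Del_le_one hx l, hx.1 l]
      · simp only [hy, hz, Pi.add_apply, Pi.smul_apply, Pi.sub_apply, Pi.single_apply, if_neg h,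
          smul_eq_mul]
        nlinarith [hx.1 l]
    · intro l hl
      have hxl : x l = 0 := hx.2.1 l hl
      have hlj : l ≠ j := fun h => hl (h ▸ hj)
      simp [hy, hz, hxl, Pi.single_apply, hlj]
    · have h1 : ∀ l, y l = x l + (-s) * ((if l = j then 1 else 0) - x l) := by
        intro l; simp [hy, hz, Pi.single_apply]
      rw [Finset.sum_congr rfl fun l _ => h1 l]
      rw [Finset.sum_add_distrib, hx.2.2]
      rw [← Finset.mul_sum, Finset.sum_sub_distrib, hx.2.2]
      simp [Finset.sum_ite_eq']
  have hxz : x ⬝ᵥ B *ᵥ z = β - q := by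
    simp only [hz, mulVec_sub, dotProduct_sub]
    rw [dot_symm hB x, single_dot_mulVec]
  have hkey := hmin y hyD
  have hexp : y ⬝ᵥ B *ᵥ y = q + 2 * (-s) * (β - q) + (-s) ^ 2 * M := by
    rw [hy, quad_expand hB, hxz]
  rw [hexp] at hkey
  have habs : s * M ≤ s * |M| := mul_le_mul_of_nonneg_left (le_abs_self M) hs0.le
  have habs2 : s * |M| ≤ β - q - s := by nlinarith
  nlinarith [mul_le_mul_of_nonneg_left habs hs0.le, sq_nonneg s]

lemma mulVec_entry_nonneg {B : Matrix (Fin n) (Fin n) ℝ} (hB : ∀ a b, 0 ≤ B a b)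
    (hx : ∀ l, 0 ≤ x l) (l : Fin n) : 0 ≤ (B *ᵥ x) l := by
  simp only [mulVec, dotProduct]
  exact Finset.sum_nonneg fun m _ => mul_nonneg (hB l m) (hx m)

lemma quad_entry_nonneg {B : Matrix (Fin n) (Fin n) ℝ} (hB : ∀ a b, 0 ≤ B a b)
    (hx : ∀ l, 0 ≤ x l) : 0 ≤ x ⬝ᵥ B *ᵥ x := by
  simp only [dotProduct]
  exact Finset.sum_nonneg fun l _ => mul_nonneg (hx l) (mulVec_entry_nonneg hB hx l)

lemma quad_two_terms {B : Matrix (Fin n) (Fin n) ℝ} (hB : ∀ a b, 0 ≤ B a b)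
    (hx : ∀ l, 0 ≤ x l) (hij : i ≠ j) :
    x i * (B i j * x j) + x j * (B j i * x i) ≤ x ⬝ᵥ B *ᵥ x := by
  have h1 : ∑ l ∈ ({i, j} : Finset (Fin n)), x l * (B *ᵥ x) l ≤ x ⬝ᵥ B *ᵥ x := by
    simp only [dotProduct]
    apply Finset.sum_le_sum_of_subset_of_nonneg (Finset.subset_univ _)
    intro l _ _
    exact mul_nonneg (hx l) (mulVec_entry_nonneg hB hx l)
  rw [Finset.sum_pair hij] at h1
  have h2 : B i j * x j ≤ (B *ᵥ x) i := by
    simp only [mulVec, dotProduct]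
    exact Finset.single_le_sum (f := fun m => B i m * x m)
      (fun m _ => mul_nonneg (hB i m) (hx m)) (Finset.mem_univ j)
  have h3 : B j i * x i ≤ (B *ᵥ x) j := by
    simp only [mulVec, dotProduct]
    exact Finset.single_le_sum (f := fun m => B j m * x m)
      (fun m _ => mul_nonneg (hB j m) (hx m)) (Finset.mem_univ i)
  have h4 := mul_le_mul_of_nonneg_left h2 (hx i)
  have h5 := mul_le_mul_of_nonneg_left h3 (hx j)
  linarith

lemma quad_diag_term {B : Matrix (Fin n) (Fin n) ℝ} (hB : ∀ a b, 0 ≤ B a b)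
    (hx : ∀ l, 0 ≤ x l) (i : Fin n) :
    x i * (B i i * x i) ≤ x ⬝ᵥ B *ᵥ x := by
  have h1 : x i * (B *ᵥ x) i ≤ x ⬝ᵥ B *ᵥ x := by
    simp only [dotProduct]
    exact Finset.single_le_sum (f := fun l => x l * (B *ᵥ x) l)
      (fun l _ => mul_nonneg (hx l) (mulVec_entry_nonneg hB hx l)) (Finset.mem_univ i)
  have h2 : B i i * x i ≤ (B *ᵥ x) i := by
    simp only [mulVec, dotProduct]
    exact Finset.single_le_sum (f := fun m => B i m * x m)
      (fun m _ => mul_nonneg (hB i m) (hx m)) (Finset.mem_univ i)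
  have h4 := mul_le_mul_of_nonneg_left h2 (hx i)
  linarith

lemma qE_nonneg (hx : ∀ l, 0 ≤ x l) : 0 ≤ x ⬝ᵥ (Eij i j) *ᵥ x :=
  quad_entry_nonneg (fun _ _ => Eij_nonneg) hx

lemma qE_pos_coords (hx : ∀ l, 0 ≤ x l) (h : 0 < x ⬝ᵥ (Eij i j) *ᵥ x) :
    0 < x i ∧ 0 < x j := by
  rcases eq_or_ne i j with hij | hij
  · subst hij
    rw [Eij_bilin_same] at h
    have : 0 < x i := by nlinarith [hx i]
    exact ⟨this, this⟩
  · rw [Eij_bilin_ne hij] at h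
    constructor
    · rcases lt_or_ge 0 (x i) with h' | h'
      · exact h'
      · exfalso; have hxi : x i = 0 := le_antisymm h' (hx i); rw [hxi] at h; nlinarith
    · rcases lt_or_ge 0 (x j) with h' | h'
      · exact h'
      · exfalso; have hxj : x j = 0 := le_antisymm h' (hx j); rw [hxj] at h; nlinarith

lemma qE_le_two {T : Finset (Fin n)} (hx : x ∈ Del T) : x ⬝ᵥ (Eij i j) *ᵥ x ≤ 2 := by
  rcases eq_or_ne i j with hij | hij
  · subst hij; rw [Eij_bilin_same]
    nlinarith [Del_le_one hx i, hx.1 i]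
  · rw [Eij_bilin_ne hij]
    nlinarith [Del_le_one hx i, Del_le_one hx j, hx.1 i, hx.1 j]

lemma EmulVec_le_one {T : Finset (Fin n)} (hx : x ∈ Del T) (l : Fin n) :
    (Eij i j *ᵥ x) l ≤ 1 := by
  rcases eq_or_ne i j with hij | hij
  · subst hij; rw [Eij_mulVec_same]
    split
    · exact Del_le_one hx i
    · norm_num
  · rw [Eij_mulVec_ne hij]
    rcases eq_or_ne l i with h1 | h1
    · have h2 : l ≠ j := fun h => hij (h1.symm.trans h)
      simp only [if_pos h1, if_neg h2, add_zero]
      exact Del_le_one hx j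
    · simp only [if_neg h1, zero_add]
      split
      · exact Del_le_one hx i
      · norm_num

lemma quad_sub_smul (A B : Matrix (Fin n) (Fin n) ℝ) (γ : ℝ) (x : Fin n → ℝ) :
    x ⬝ᵥ (A - γ • B) *ᵥ x = x ⬝ᵥ A *ᵥ x - γ * (x ⬝ᵥ B *ᵥ x) := by
  rw [sub_mulVec, smul_mulVec, dotProduct_sub, dotProduct_smul, smul_eq_mul]

lemma mulVec_sub_smul (A B : Matrix (Fin n) (Fin n) ℝ) (γ : ℝ) (x : Fin n → ℝ) (l : Fin n) :
    ((A - γ • B) *ᵥ x) l = (A *ᵥ x) l - γ * (B *ᵥ x) l := by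
  rw [sub_mulVec, smul_mulVec]
  simp [smul_eq_mul]

lemma isSymm_sub_smul {A B : Matrix (Fin n) (Fin n) ℝ} (hA : A.IsSymm) (hB : B.IsSymm)
    (γ : ℝ) : (A - γ • B).IsSymm := by
  unfold Matrix.IsSymm at *
  rw [transpose_sub, transpose_smul, hA, hB]

lemma quad_box_bound {A : Matrix (Fin n) (Fin n) ℝ} {D : Finset (Fin n)} {r : Fin n → ℝ}
    {ρ : ℝ} (hρ : 0 ≤ ρ) (hr : ∀ l, 0 ≤ r l) (hsupp : ∀ l, l ∉ D → r l = 0)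
    (hb : ∀ l, r l ≤ ρ) :
    r ⬝ᵥ A *ᵥ r ≤ (∑ l ∈ D, ∑ m ∈ D, |A l m|) * ρ ^ 2 := by
  have e1 : r ⬝ᵥ A *ᵥ r = ∑ l ∈ D, r l * ∑ m ∈ D, A l m * r m := by
    rw [show r ⬝ᵥ A *ᵥ r = ∑ l, r l * ∑ m, A l m * r m from rfl]
    rw [← Finset.sum_subset (Finset.subset_univ D)]
    · apply Finset.sum_congr rfl
      intro l _
      congr 1
      rw [← Finset.sum_subset (Finset.subset_univ D)]
      intro m _ hm
      rw [hsupp m hm, mul_zero]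
    · intro l _ hl
      rw [hsupp l hl, zero_mul]
  rw [e1, Finset.sum_mul]
  apply Finset.sum_le_sum
  intro l hl
  rw [Finset.mul_sum, Finset.sum_mul]
  apply Finset.sum_le_sum
  intro m hm
  have h1 : r l * (A l m * r m) ≤ |A l m| * (r l * r m) := by
    have : r l * (A l m * r m) = A l m * (r l * r m) := by ring
    rw [this]
    exact mul_le_mul_of_nonneg_right (le_abs_self _) (mul_nonneg (hr l) (hr m))
  have h2 : r l * r m ≤ ρ ^ 2 := by
    rw [pow_two]
    exact mul_le_mul (hb l) (hb m) (hr m) hρ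
  calc r l * (A l m * r m) ≤ |A l m| * (r l * r m) := h1
    _ ≤ |A l m| * ρ ^ 2 := mul_le_mul_of_nonneg_left h2 (abs_nonneg _)

set_option maxHeartbeats 1000000 in
lemma key {A : Matrix (Fin n) (Fin n) ℝ} (hA : Copositive A) (i j : Fin n) :
    ∀ N : ℕ, ∀ T : Finset (Fin n), T.card ≤ N → i ∈ T → j ∈ T →
      (∀ γ : ℝ, 0 < γ → ∃ x : Fin n → ℝ, (∀ l, 0 ≤ x l) ∧ (∀ l, l ∉ T → x l = 0) ∧
        x ⬝ᵥ A *ᵥ x - γ * (x ⬝ᵥ (Eij i j) *ᵥ x) < 0) →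
      ∃ u, IsZeroOf A u ∧ (A *ᵥ u) i = 0 ∧ (A *ᵥ u) j = 0 ∧ 0 < u i + u j := by
  intro N
  induction N with
  | zero =>
    intro T hT hi _ _
    rw [Nat.le_zero, Finset.card_eq_zero] at hT
    exact absurd (hT ▸ hi) (Finset.notMem_empty i)
  | succ N ih =>
    intro T hT hi hj hcert
    classical
    set γs : ℕ → ℝ := fun k => 1 / (k + 1) with hγs
    have hγpos : ∀ k : ℕ, 0 < γs k := fun k => by positivity
    -- normalized certificates
    have hnorm : ∀ γ : ℝ, 0 < γ → ∃ x ∈ Del T,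
        x ⬝ᵥ A *ᵥ x - γ * (x ⬝ᵥ (Eij i j) *ᵥ x) < 0 := by
      intro γ hγ
      obtain ⟨x, hx1, hx2, hx3⟩ := hcert γ hγ
      have hσ : 0 < ∑ l, x l := by
        rcases (Finset.sum_nonneg fun l _ => hx1 l).lt_or_eq with h | h
        · exact h
        · exfalso
          have hx0 : ∀ l, x l = 0 := by
            intro l
            have := (Finset.sum_eq_zero_iff_of_nonneg (fun l _ => hx1 l)).mp h.symm
            exact this l (Finset.mem_univ l)
          have hxz : x = 0 := funext hx0
          rw [hxz] at hx3
          simp at hx3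
      refine ⟨(∑ l, x l)⁻¹ • x, ⟨?_, ?_, ?_⟩, ?_⟩
      · intro l; exact mul_nonneg (inv_nonneg.2 hσ.le) (hx1 l)
      · intro l hl; simp [hx2 l hl]
      · show ∑ l, ((∑ m, x m)⁻¹ • x) l = 1
        simp only [Pi.smul_apply, smul_eq_mul, ← Finset.mul_sum]
        exact inv_mul_cancel₀ hσ.ne'
      · have e1 : ((∑ l, x l)⁻¹ • x) ⬝ᵥ A *ᵥ ((∑ l, x l)⁻¹ • x)
            = ((∑ l, x l)⁻¹)^2 * (x ⬝ᵥ A *ᵥ x) := by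
          rw [smul_dotProduct, mulVec_smul, dotProduct_smul]
          simp [smul_eq_mul]; ring
        have e2 : ((∑ l, x l)⁻¹ • x) ⬝ᵥ (Eij i j) *ᵥ ((∑ l, x l)⁻¹ • x)
            = ((∑ l, x l)⁻¹)^2 * (x ⬝ᵥ (Eij i j) *ᵥ x) := by
          rw [smul_dotProduct, mulVec_smul, dotProduct_smul]
          simp [smul_eq_mul]; ring
        rw [e1, e2]
        have hσ2 : 0 < ((∑ l, x l)⁻¹)^2 := by positivity
        nlinarith
    -- minimizers
    have hex : ∀ k : ℕ, ∃ x, x ∈ Del T ∧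
        (x ⬝ᵥ A *ᵥ x - γs k * (x ⬝ᵥ Eij i j *ᵥ x) < 0) ∧
        ∀ y ∈ Del T, x ⬝ᵥ A *ᵥ x - γs k * (x ⬝ᵥ Eij i j *ᵥ x)
          ≤ y ⬝ᵥ A *ᵥ y - γs k * (y ⬝ᵥ Eij i j *ᵥ y) := by
      intro k
      obtain ⟨c, hcD, hcneg⟩ := hnorm (γs k) (hγpos k)
      obtain ⟨x, hxD, hxmin⟩ := (isCompact_Del T).exists_isMinOn ⟨c, hcD⟩
        ((cont_quad (A - γs k • Eij i j)).continuousOn)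
      have hmin' : ∀ y ∈ Del T, x ⬝ᵥ A *ᵥ x - γs k * (x ⬝ᵥ Eij i j *ᵥ x)
          ≤ y ⬝ᵥ A *ᵥ y - γs k * (y ⬝ᵥ Eij i j *ᵥ y) := by
        intro y hy
        have h0 : x ⬝ᵥ (A - γs k • Eij i j) *ᵥ x ≤ y ⬝ᵥ (A - γs k • Eij i j) *ᵥ y :=
          hxmin hy
        rw [quad_sub_smul, quad_sub_smul] at h0
        exact h0
      exact ⟨x, hxD, lt_of_le_of_lt (hmin' c hcD) hcneg, hmin'⟩
    choose xs hxD hxneg hxmin using hex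
    -- basic per-k facts
    have hqE2 : ∀ k, xs k ⬝ᵥ Eij i j *ᵥ xs k ≤ 2 := fun k => qE_le_two (hxD k)
    have hqAnn : ∀ k, 0 ≤ xs k ⬝ᵥ A *ᵥ xs k := fun k => hA.2 (xs k) (hxD k).1
    have hqAle : ∀ k, xs k ⬝ᵥ A *ᵥ xs k ≤ 2 * γs k := by
      intro k
      have h1 := hxneg k
      have h2 := hqE2 k
      have h3 := (hγpos k).le
      nlinarith
    have hqEpos : ∀ k, 0 < xs k ⬝ᵥ Eij i j *ᵥ xs k := by
      intro k
      by_contra h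
      push_neg at h
      have : γs k * (xs k ⬝ᵥ Eij i j *ᵥ xs k) ≤ 0 :=
        mul_nonpos_of_nonneg_of_nonpos (hγpos k).le h
      linarith [hxneg k, hqAnn k]
    have hxi : ∀ k, 0 < xs k i := fun k => (qE_pos_coords (hxD k).1 (hqEpos k)).1
    have hxj : ∀ k, 0 < xs k j := fun k => (qE_pos_coords (hxD k).1 (hqEpos k)).2
    -- first-order conditions
    have hfo : ∀ k, ∀ l ∈ T, 0 < xs k l → (A *ᵥ xs k) l ≤ γs k := by
      intro k l hl hxl
      have hBsymm : (A - γs k • Eij i j).IsSymm := isSymm_sub_smul hA.1 Eij_isSymm _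
      have hmin'' : ∀ y ∈ Del T, xs k ⬝ᵥ (A - γs k • Eij i j) *ᵥ xs k
          ≤ y ⬝ᵥ (A - γs k • Eij i j) *ᵥ y := by
        intro y hy
        rw [quad_sub_smul, quad_sub_smul]
        exact hxmin k y hy
      have h1 := min_first_order hBsymm (hxD k) hmin'' hl hxl
      rw [mulVec_sub_smul, quad_sub_smul] at h1
      have h2 : (Eij i j *ᵥ xs k) l ≤ 1 := EmulVec_le_one (hxD k) l
      have h3 := hxneg k
      have h4 := (hγpos k).le
      nlinarith
    -- subsequence
    obtain ⟨u, huD, φ, hφ, hconv⟩ := (isCompact_Del T).tendsto_subseq hxD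
    have hγ0 : Filter.Tendsto (fun k => γs (φ k)) Filter.atTop (nhds 0) := by
      have h1 : Filter.Tendsto γs Filter.atTop (nhds 0) := by
        exact tendsto_one_div_add_atTop_nhds_zero_nat
      exact h1.comp hφ.tendsto_atTop
    have hqAu : u ⬝ᵥ A *ᵥ u = 0 := by
      have h1 : Filter.Tendsto (fun k => xs (φ k) ⬝ᵥ A *ᵥ xs (φ k)) Filter.atTop
          (nhds (u ⬝ᵥ A *ᵥ u)) := ((cont_quad A).tendsto u).comp hconv
      have h2 : Filter.Tendsto (fun k => 2 * γs (φ k)) Filter.atTop (nhds 0) := by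
        simpa using hγ0.const_mul 2
      have hle : u ⬝ᵥ A *ᵥ u ≤ 0 :=
        le_of_tendsto_of_tendsto' h1 h2 (fun k => hqAle (φ k))
      exact le_antisymm hle (hA.2 u huD.1)
    have hu0 : u ≠ 0 := by
      intro h
      have := huD.2.2
      rw [h] at this
      simp at this
    have hAu_lim : ∀ l ∈ T, (∀ k, 0 < xs k l) → (A *ᵥ u) l = 0 := by
      intro l hl hpos
      have h1 : Filter.Tendsto (fun k => (A *ᵥ xs (φ k)) l) Filter.atTop
          (nhds ((A *ᵥ u) l)) := ((cont_mulVec A l).tendsto u).comp hconv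
      have hle : (A *ᵥ u) l ≤ 0 :=
        le_of_tendsto_of_tendsto' h1 hγ0 (fun k => hfo (φ k) l hl (hpos (φ k)))
      exact le_antisymm hle (zero_mulVec_nonneg hA huD.1 hqAu l)
    have hAu_i : (A *ᵥ u) i = 0 := hAu_lim i hi hxi
    have hAu_j : (A *ᵥ u) j = 0 := hAu_lim j hj hxj
    by_cases hpos : 0 < u i + u j
    · exact ⟨u, ⟨hu0, huD.1, hqAu⟩, hAu_i, hAu_j, hpos⟩
    · push_neg at hpos
      have hui0 : u i = 0 := le_antisymm (by linarith [huD.1 i, huD.1 j]) (huD.1 i)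
      have huj0 : u j = 0 := le_antisymm (by linarith [huD.1 i, huD.1 j]) (huD.1 j)
      set T' := T.filter (fun l => (A *ᵥ u) l = 0) with hT'
      have hiT' : i ∈ T' := Finset.mem_filter.2 ⟨hi, hAu_i⟩
      have hjT' : j ∈ T' := Finset.mem_filter.2 ⟨hj, hAu_j⟩
      have hsuppT' : ∀ l, u l ≠ 0 → l ∈ T' := by
        intro l hl
        have hlT : l ∈ T := by
          by_contra h
          exact hl (huD.2.1 l h)
        exact Finset.mem_filter.2 ⟨hlT, zero_mulVec_supp hA huD.1 hqAu hl⟩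
      by_cases hTT : T' = T
      · -- pigeonhole branch
        set S := Finset.univ.filter (fun l => u l ≠ 0) with hS
        have hSne : S.Nonempty := by
          obtain ⟨l, hl⟩ := Function.ne_iff.mp hu0
          exact ⟨l, Finset.mem_filter.2 ⟨Finset.mem_univ l, hl⟩⟩
        have hsel : ∀ k : ℕ, ∃ m ∈ S, ∀ l ∈ S,
            xs (φ k) m / u m ≤ xs (φ k) l / u l :=
          fun k => Finset.exists_min_image S _ hSne
        choose f hfS hfmin using hsel
        obtain ⟨m, hmfib⟩ := Finite.exists_infinite_fiber f
        have hmfib' : (f ⁻¹' {m}).Infinite := Set.infinite_coe_iff.mp hmfib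
        obtain ⟨k₀, hk₀⟩ := hmfib'.nonempty
        have hmS : m ∈ S := by
          have := hfS k₀
          rwa [show f k₀ = m from hk₀] at this
        have hum : u m ≠ 0 := (Finset.mem_filter.mp hmS).2
        have hum0 : 0 < u m := lt_of_le_of_ne (huD.1 m) (Ne.symm hum)
        have hmT : m ∈ T := by
          by_contra h
          exact hum (huD.2.1 m h)
        have hmi : i ≠ m := fun h => hum (h ▸ hui0)
        have hmj : j ≠ m := fun h => hum (h ▸ huj0)
        apply ih (T.erase m)
        · have := Finset.card_erase_of_mem hmT
          omega
        · exact Finset.mem_erase.2 ⟨hmi, hi⟩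
        · exact Finset.mem_erase.2 ⟨hmj, hj⟩
        · intro γ hγ
          obtain ⟨N₀, hN₀⟩ := exists_nat_ge (1 / γ)
          obtain ⟨K, hKfib, hKgt⟩ := hmfib'.exists_gt N₀
          have hfK : f K = m := hKfib
          have hγK : γs (φ K) ≤ γ := by
            have h1 : (1:ℝ) / γ ≤ (φ K : ℝ) + 1 := by
              have h2 : (N₀ : ℝ) ≤ (φ K : ℝ) := by
                exact_mod_cast le_trans hKgt.le hφ.le_apply
              linarith
            have hpos' : (0:ℝ) < (φ K : ℝ) + 1 := by positivity
            calc γs (φ K) = 1 / ((φ K : ℝ) + 1) := rfl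
              _ ≤ γ := by
                rw [div_le_iff₀ hpos']
                rw [div_le_iff₀ hγ] at h1
                nlinarith
          set x := xs (φ K) with hx
          set s := -(x m / u m) with hsdef
          refine ⟨x + s • u, ?_, ?_, ?_⟩
          · intro l
            rcases eq_or_ne (u l) 0 with h | h
            · simp [h]; exact (hxD (φ K)).1 l
            · have hlS : l ∈ S := Finset.mem_filter.2 ⟨Finset.mem_univ l, h⟩
              have hul : 0 < u l := lt_of_le_of_ne (huD.1 l) (Ne.symm h)
              have hratio := hfmin K l hlS
              rw [hfK] at hratio
              have : x m / u m * u l ≤ x l := by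
                rw [div_mul_eq_mul_div, div_le_iff₀ hum0]
                have := (div_le_div_iff₀ hum0 hul).mp hratio
                linarith
              simp only [Pi.add_apply, Pi.smul_apply, smul_eq_mul, hsdef]
              linarith
          · intro l hl
            rw [Finset.mem_erase] at hl
            push_neg at hl
            rcases eq_or_ne l m with h | h
            · subst h
              simp only [Pi.add_apply, Pi.smul_apply, smul_eq_mul, hsdef]
              field_simp
              ring
            · have hlT : l ∉ T := hl h
              have hxl : x l = 0 := (hxD (φ K)).2.1 l hlT
              have hul : u l = 0 := huD.2.1 l hlT
              simp [hxl, hul]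
          · -- quadratic value unchanged
            have hxAu : x ⬝ᵥ A *ᵥ u = 0 := by
              rw [show x ⬝ᵥ A *ᵥ u = ∑ l, x l * (A *ᵥ u) l from rfl]
              apply Finset.sum_eq_zero
              intro l _
              rcases eq_or_ne (x l) 0 with h | h
              · rw [h, zero_mul]
              · have hlT : l ∈ T := by
                  by_contra h'
                  exact h ((hxD (φ K)).2.1 l h')
                have : l ∈ T' := hTT ▸ hlT
                rw [(Finset.mem_filter.mp this).2, mul_zero]
            have hxEu : x ⬝ᵥ Eij i j *ᵥ u = 0 := by
              rcases eq_or_ne i j with hij | hij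
              · subst hij; rw [Eij_bilin_same, hui0, mul_zero]
              · simp [Eij_bilin_ne hij, hui0, huj0]
            have hqEu : u ⬝ᵥ Eij i j *ᵥ u = 0 := by
              rcases eq_or_ne i j with hij | hij
              · subst hij; rw [Eij_bilin_same, hui0, mul_zero]
              · simp [Eij_bilin_ne hij, hui0, huj0]
            have eA : (x + s • u) ⬝ᵥ A *ᵥ (x + s • u) = x ⬝ᵥ A *ᵥ x := by
              rw [quad_expand hA.1, hxAu, hqAu]; ring
            have eE : (x + s • u) ⬝ᵥ Eij i j *ᵥ (x + s • u) = x ⬝ᵥ Eij i j *ᵥ x := by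
              rw [quad_expand Eij_isSymm, hxEu, hqEu]; ring
            rw [eA, eE]
            have hneg := hxneg (φ K)
            have hqEx : 0 ≤ x ⬝ᵥ Eij i j *ᵥ x := qE_nonneg (hxD (φ K)).1
            nlinarith
      · -- mass-pushing branch
        have hT'sub : T' ⊆ T := Finset.filter_subset _ _
        have hcard' : T'.card ≤ N := by
          have : T'.card < T.card :=
            Finset.card_lt_card (Finset.ssubset_iff_subset_ne.mpr ⟨hT'sub, hTT⟩)
          omega
        set D := T \ T' with hD
        have hDne : D.Nonempty := by
          rw [hD, Finset.sdiff_nonempty]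
          intro hsub
          exact hTT (Finset.Subset.antisymm hT'sub hsub)
        obtain ⟨mD, hmD, hmDmin⟩ := Finset.exists_min_image D (fun l => (A *ᵥ u) l) hDne
        set c := (A *ᵥ u) mD with hc
        have hc0 : 0 < c := by
          have h1 : mD ∈ T := (Finset.mem_sdiff.mp hmD).1
          have h2 : mD ∉ T' := (Finset.mem_sdiff.mp hmD).2
          have h3 : (A *ᵥ u) mD ≠ 0 := fun h => h2 (Finset.mem_filter.2 ⟨h1, h⟩)
          exact lt_of_le_of_ne (zero_mulVec_nonneg hA huD.1 hqAu mD) (Ne.symm h3)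
        set C₀ := ∑ l ∈ D, ∑ m ∈ D, |A l m| with hC₀
        have hC₀0 : 0 ≤ C₀ :=
          Finset.sum_nonneg fun l _ => Finset.sum_nonneg fun m _ => abs_nonneg _
        have huD0 : ∀ l ∈ D, u l = 0 := by
          intro l hl
          by_contra h
          exact (Finset.mem_sdiff.mp hl).2 (hsuppT' l h)
        -- eventual properties
        have hev1 : ∀ᶠ k in Filter.atTop, ∀ l ∈ D, c / 2 ≤ (A *ᵥ xs (φ k)) l := by
          rw [Filter.eventually_all_finset]
          intro l hl
          have h1 : Filter.Tendsto (fun k => (A *ᵥ xs (φ k)) l) Filter.atTop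
              (nhds ((A *ᵥ u) l)) := ((cont_mulVec A l).tendsto u).comp hconv
          have h2 : c / 2 < (A *ᵥ u) l := lt_of_lt_of_le (by linarith) (hmDmin l hl)
          exact h1.eventually (eventually_ge_nhds h2)
        have hev2 : ∀ᶠ k in Filter.atTop,
            ∑ l ∈ D, xs (φ k) l ≤ c / (2 * (C₀ + 1)) := by
          have h1 : Filter.Tendsto (fun k => ∑ l ∈ D, xs (φ k) l) Filter.atTop
              (nhds (∑ l ∈ D, u l)) := ((cont_psum D).tendsto u).comp hconv
          have h2 : ∑ l ∈ D, u l = 0 := Finset.sum_eq_zero huD0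
          rw [h2] at h1
          have h3 : (0:ℝ) < c / (2 * (C₀ + 1)) := by positivity
          exact h1.eventually (eventually_le_nhds h3)
        apply ih T' hcard' hiT' hjT'
        intro γ hγ
        have hev3 : ∀ᶠ k in Filter.atTop, γs (φ k) ≤ γ :=
          hγ0.eventually (eventually_le_nhds hγ)
        obtain ⟨k, hkall⟩ := ((hev1.and hev2).and hev3).exists
        obtain ⟨⟨hk1, hk2⟩, hk3⟩ := hkall
        set x := xs (φ k) with hxdef
        set x' : Fin n → ℝ := fun l => if l ∈ T' then x l else 0 with hx'
        set r : Fin n → ℝ := fun l => if l ∈ T' then 0 else x l with hr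
        have hxsplit : x = x' + r := by
          funext l
          simp only [hx', hr, Pi.add_apply]
          split <;> ring
        set rb := ∑ l ∈ D, x l with hrb
        have hrb0 : 0 ≤ rb :=
          Finset.sum_nonneg fun l _ => (hxD (φ k)).1 l
        have hrsupp : ∀ l, l ∉ D → r l = 0 := by
          intro l hl
          simp only [hr]
          split
          · rfl
          · rename_i hlT'
            rcases eq_or_ne (x l) 0 with h | h
            · exact h
            · exfalso
              have hlT : l ∈ T := by
                by_contra h'
                exact h ((hxD (φ k)).2.1 l h')
              exact hl (Finset.mem_sdiff.2 ⟨hlT, hlT'⟩)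
        have hrnn : ∀ l, 0 ≤ r l := by
          intro l
          simp only [hr]
          split
          · exact le_refl 0
          · exact (hxD (φ k)).1 l
        have hrD : ∀ l ∈ D, r l = x l := by
          intro l hl
          have : l ∉ T' := (Finset.mem_sdiff.mp hl).2
          simp [hr, this]
        have hrle : ∀ l, r l ≤ rb := by
          intro l
          by_cases hl : l ∈ D
          · rw [hrD l hl]
            exact Finset.single_le_sum (fun m _ => (hxD (φ k)).1 m) hl
          · rw [hrsupp l hl]
            exact hrb0
        have hrAx : c / 2 * rb ≤ r ⬝ᵥ A *ᵥ x := by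
          have h1 : ∀ l ∈ Finset.univ, (if l ∈ D then x l * (c / 2) else 0)
              ≤ r l * (A *ᵥ x) l := by
            intro l _
            by_cases hl : l ∈ D
            · rw [if_pos hl, hrD l hl]
              exact mul_le_mul_of_nonneg_left (hk1 l hl) ((hxD (φ k)).1 l)
            · rw [if_neg hl, hrsupp l hl, zero_mul]
          have h2 := Finset.sum_le_sum h1
          have h3 : ∑ l, (if l ∈ D then x l * (c / 2) else 0) = rb * (c / 2) := by
            rw [Finset.sum_ite_mem, Finset.univ_inter, ← Finset.sum_mul]
          rw [h3] at h2
          calc c / 2 * rb = rb * (c / 2) := by ring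
            _ ≤ ∑ l, r l * (A *ᵥ x) l := h2
            _ = r ⬝ᵥ A *ᵥ x := rfl
        have hqr : r ⬝ᵥ A *ᵥ r ≤ C₀ * rb ^ 2 := quad_box_bound hrb0 hrnn hrsupp hrle
        have hexp : x ⬝ᵥ A *ᵥ x = x' ⬝ᵥ A *ᵥ x' + 2 * (x' ⬝ᵥ A *ᵥ r) + r ⬝ᵥ A *ᵥ r := by
          have h := quad_expand hA.1 x' r 1
          rw [one_smul] at h
          rw [← hxsplit] at h
          simpa using h
        have hx'Ar : x' ⬝ᵥ A *ᵥ r = x ⬝ᵥ A *ᵥ r - r ⬝ᵥ A *ᵥ r := by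
          rw [hxsplit, add_dotProduct]
          ring
        have hxAr : c / 2 * rb ≤ x ⬝ᵥ A *ᵥ r := by
          rw [dot_symm hA.1]
          exact hrAx
        have hbound : x' ⬝ᵥ A *ᵥ x' ≤ x ⬝ᵥ A *ᵥ x - c * rb + C₀ * rb ^ 2 := by
          linarith
        have hCrb : C₀ * rb ^ 2 ≤ c / 2 * rb := by
          have h5 : C₀ * rb ≤ C₀ * (c / (2 * (C₀ + 1))) :=
            mul_le_mul_of_nonneg_left hk2 hC₀0
          have h6 : C₀ * (c / (2 * (C₀ + 1))) ≤ c / 2 := by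
            rw [mul_div_assoc']
            rw [div_le_div_iff₀ (by positivity) (by norm_num)]
            nlinarith
          have h7 := mul_le_mul_of_nonneg_right (h5.trans h6) hrb0
          nlinarith
        have hqEeq : x' ⬝ᵥ Eij i j *ᵥ x' = x ⬝ᵥ Eij i j *ᵥ x := by
          have hxi' : x' i = x i := by
            simp only [hx']
            rw [if_pos hiT']
          have hxj' : x' j = x j := by
            simp only [hx']
            rw [if_pos hjT']
          rcases eq_or_ne i j with hij | hij
          · subst hij; rw [Eij_bilin_same, Eij_bilin_same, hxi']
          · rw [Eij_bilin_ne hij, Eij_bilin_ne hij, hxi', hxj']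
        refine ⟨x', ?_, ?_, ?_⟩
        · intro l
          simp only [hx']
          split
          · exact (hxD (φ k)).1 l
          · exact le_refl 0
        · intro l hl
          simp [hx', hl]
        · have hneg := hxneg (φ k)
          have hqEx : 0 ≤ x ⬝ᵥ Eij i j *ᵥ x := qE_nonneg (hxD (φ k)).1
          rw [hqEeq]
          nlinarith

lemma minref {A : Matrix (Fin n) (Fin n) ℝ} (hA : Copositive A) (i j : Fin n) :
    ∀ N : ℕ, ∀ u : Fin n → ℝ,
      (Finset.univ.filter (fun l => u l ≠ 0)).card ≤ N →
      IsZeroOf A u → (A *ᵥ u) i = 0 → (A *ᵥ u) j = 0 → 0 < u i + u j →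
      ∃ w, IsMinimalZeroOf A w ∧ (A *ᵥ w) i = 0 ∧ (A *ᵥ w) j = 0 ∧ 0 < w i + w j := by
  classical
  intro N
  induction N with
  | zero =>
    intro u hcard hu _ _ _
    exfalso
    rw [Nat.le_zero, Finset.card_eq_zero, Finset.filter_eq_empty_iff] at hcard
    exact hu.1 (funext fun l => not_not.mp (hcard (Finset.mem_univ l)))
  | succ N ih =>
    intro u hcard hu hAi hAj hpos
    by_cases hmin : ∃ v, IsZeroOf A v ∧ Supp v ⊂ Supp u
    · obtain ⟨v, hv, hsub⟩ := hmin
      have hvsub : ∀ l, v l ≠ 0 → u l ≠ 0 := fun l hl => hsub.1 hl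
      obtain ⟨l₁, hl₁u, hl₁v⟩ : ∃ l, u l ≠ 0 ∧ v l = 0 := by
        obtain ⟨l, hl1, hl2⟩ := Set.exists_of_ssubset hsub
        exact ⟨l, hl1, not_not.mp hl2⟩
      set Sv := Finset.univ.filter (fun l => v l ≠ 0) with hSv
      have hSvne : Sv.Nonempty := by
        obtain ⟨l, hl⟩ := Function.ne_iff.mp hv.1
        exact ⟨l, Finset.mem_filter.2 ⟨Finset.mem_univ l, hl⟩⟩
      obtain ⟨l₀, hl₀, hl₀min⟩ := Finset.exists_min_image Sv (fun l => u l / v l) hSvne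
      have hvl₀ : 0 < v l₀ :=
        lt_of_le_of_ne (hv.2.1 l₀) (Ne.symm (Finset.mem_filter.mp hl₀).2)
      have hul₀ : 0 < u l₀ :=
        lt_of_le_of_ne (hu.2.1 l₀) (Ne.symm (hvsub l₀ (Finset.mem_filter.mp hl₀).2))
      set t := u l₀ / v l₀ with htdef
      have ht0 : 0 < t := div_pos hul₀ hvl₀
      set w : Fin n → ℝ := u - t • v with hw
      have hwnn : ∀ l, 0 ≤ w l := by
        intro l
        rcases eq_or_ne (v l) 0 with h | h
        · simp [hw, h, hu.2.1 l]
        · have hvl : 0 < v l := lt_of_le_of_ne (hv.2.1 l) (Ne.symm h)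
          have hmem : l ∈ Sv := Finset.mem_filter.2 ⟨Finset.mem_univ l, h⟩
          have hr := hl₀min l hmem
          have : t * v l ≤ u l := by
            rw [htdef, div_mul_eq_mul_div, div_le_iff₀ hvl₀]
            have := (div_le_div_iff₀ hvl₀ hvl).mp hr
            linarith
          simp only [hw, Pi.sub_apply, Pi.smul_apply, smul_eq_mul]
          linarith
      have hwl₀ : w l₀ = 0 := by
        simp only [hw, Pi.sub_apply, Pi.smul_apply, smul_eq_mul, htdef]
        field_simp
        ring
      have hwl₁ : w l₁ = u l₁ := by
        simp [hw, hl₁v]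
      have hwne : w ≠ 0 := by
        intro h
        apply hl₁u
        rw [← hwl₁, h]
        rfl
      have hvAu : v ⬝ᵥ A *ᵥ u = 0 := by
        rw [show v ⬝ᵥ A *ᵥ u = ∑ l, v l * (A *ᵥ u) l from rfl]
        apply Finset.sum_eq_zero
        intro l _
        rcases eq_or_ne (v l) 0 with h | h
        · rw [h, zero_mul]
        · rw [zero_mulVec_supp hA hu.2.1 hu.2.2 (hvsub l h), mul_zero]
      have huAv : u ⬝ᵥ A *ᵥ v = 0 := by rw [dot_symm hA.1]; exact hvAu
      have hwq : w ⬝ᵥ A *ᵥ w = 0 := by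
        have e : w = u + (-t) • v := by rw [hw, neg_smul, ← sub_eq_add_neg]
        rw [e, quad_expand hA.1, huAv, hu.2.2, hv.2.2]
        ring
      have hwzero : IsZeroOf A w := ⟨hwne, hwnn, hwq⟩
      have hAw : ∀ l, (A *ᵥ w) l = (A *ᵥ u) l - t * (A *ᵥ v) l := by
        intro l
        rw [hw, mulVec_sub, mulVec_smul]
        simp [smul_eq_mul]
      have hAvi : (A *ᵥ v) i = 0 ∧ (A *ᵥ w) i = 0 := by
        have h1 : 0 ≤ (A *ᵥ w) i := zero_mulVec_nonneg hA hwnn hwq i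
        have h2 : 0 ≤ (A *ᵥ v) i := zero_mulVec_nonneg hA hv.2.1 hv.2.2 i
        rw [hAw i, hAi] at h1
        have hv0 : (A *ᵥ v) i = 0 := by nlinarith
        have hw0 : (A *ᵥ w) i = 0 := by rw [hAw i, hAi, hv0]; ring
        exact ⟨hv0, hw0⟩
      have hAvj : (A *ᵥ v) j = 0 ∧ (A *ᵥ w) j = 0 := by
        have h1 : 0 ≤ (A *ᵥ w) j := zero_mulVec_nonneg hA hwnn hwq j
        have h2 : 0 ≤ (A *ᵥ v) j := zero_mulVec_nonneg hA hv.2.1 hv.2.2 j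
        rw [hAw j, hAj] at h1
        have hv0 : (A *ᵥ v) j = 0 := by nlinarith
        have hw0 : (A *ᵥ w) j = 0 := by rw [hAw j, hAj, hv0]; ring
        exact ⟨hv0, hw0⟩
      have hcardv : Sv.card ≤ N := by
        have hsubF : Sv ⊆ Finset.univ.filter (fun l => u l ≠ 0) := by
          intro l hl
          exact Finset.mem_filter.2 ⟨Finset.mem_univ l, hvsub l (Finset.mem_filter.mp hl).2⟩
        have hl₁mem : l₁ ∈ Finset.univ.filter (fun l => u l ≠ 0) :=
          Finset.mem_filter.2 ⟨Finset.mem_univ l₁, hl₁u⟩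
        have hl₁nmem : l₁ ∉ Sv := fun h => (Finset.mem_filter.mp h).2 hl₁v
        have : Sv.card < (Finset.univ.filter (fun l => u l ≠ 0)).card :=
          Finset.card_lt_card (Finset.ssubset_iff_of_subset hsubF |>.mpr ⟨l₁, hl₁mem, hl₁nmem⟩)
        omega
      have hcardw : (Finset.univ.filter (fun l => w l ≠ 0)).card ≤ N := by
        have hsubF : Finset.univ.filter (fun l => w l ≠ 0)
            ⊆ (Finset.univ.filter (fun l => u l ≠ 0)).erase l₀ := by
          intro l hl
          have hwl : w l ≠ 0 := (Finset.mem_filter.mp hl).2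
          have hul : u l ≠ 0 := by
            intro h
            rcases eq_or_ne (v l) 0 with h' | h'
            · apply hwl; simp [hw, h, h']
            · exact hvsub l h' h
          have hll₀ : l ≠ l₀ := fun h => hwl (h ▸ hwl₀)
          exact Finset.mem_erase.2 ⟨hll₀, Finset.mem_filter.2 ⟨Finset.mem_univ l, hul⟩⟩
        have hl₀mem : l₀ ∈ Finset.univ.filter (fun l => u l ≠ 0) :=
          Finset.mem_filter.2 ⟨Finset.mem_univ l₀, ne_of_gt hul₀⟩
        have h1 := Finset.card_le_card hsubF
        have h2 := Finset.card_erase_of_mem hl₀mem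
        omega
      by_cases hvij : 0 < v i + v j
      · exact ih v hcardv hv hAvi.1 hAvj.1 hvij
      · push_neg at hvij
        have hvi : v i = 0 := le_antisymm (by linarith [hv.2.1 i, hv.2.1 j]) (hv.2.1 i)
        have hvj : v j = 0 := le_antisymm (by linarith [hv.2.1 i, hv.2.1 j]) (hv.2.1 j)
        have hwij : 0 < w i + w j := by
          have e1 : w i = u i := by simp [hw, hvi]
          have e2 : w j = u j := by simp [hw, hvj]
          rw [e1, e2]; exact hpos
        exact ih w hcardw hwzero hAvi.2 hAvj.2 hwij
    · exact ⟨u, ⟨hu, hmin⟩, hAi, hAj, hpos⟩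

lemma contra_aux {A B : Matrix (Fin n) (Fin n) ℝ} {γ : ℝ} (hγ : 0 < γ)
    (hBs : B.IsSymm) (hBnn : ∀ a b, 0 ≤ B a b) {i j : Fin n} (hij : i ≠ j)
    (hBij : 0 < B i j) {u : Fin n → ℝ} (hu : IsZeroOf A u) (hAsymm : A.IsSymm)
    (hAj : (A *ᵥ u) j = 0) (hui : 0 < u i)
    (hcop : Copositive (A - γ • B)) : False := by
  set t := γ * B i j * u i / (|A j j| + 1) with htdef
  have ht0 : 0 < t := by positivity
  set x := u + t • (Pi.single j 1 : Fin n → ℝ) with hx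
  have hxnn : ∀ l, 0 ≤ x l := line_nonneg hu.2.1 (by linarith [hu.2.1 j])
  have h0 := hcop.2 x hxnn
  rw [show (A - γ • B).mulVec x = (A - γ • B) *ᵥ x from rfl, quad_sub_smul] at h0
  have hqA : x ⬝ᵥ A *ᵥ x = t ^ 2 * A j j := by
    rw [hx, quad_line hAsymm, hu.2.2, hAj]; ring
  have hxi : x i = u i := by
    simp [hx, Pi.single_apply, hij]
  have hxj : t ≤ x j := by
    simp only [hx, Pi.add_apply, Pi.smul_apply, Pi.single_eq_same, smul_eq_mul, mul_one]
    linarith [hu.2.1 j]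
  have hBji : B j i = B i j := by
    have := congrFun (congrFun hBs j) i
    rw [transpose_apply] at this
    exact this.symm
  have hB2 := quad_two_terms hBnn hxnn hij
  have hlow : 2 * (B i j * u i * t) ≤ x ⬝ᵥ B *ᵥ x := by
    have e1 : u i * (B i j * t) ≤ x i * (B i j * x j) := by
      rw [hxi]
      exact mul_le_mul_of_nonneg_left (mul_le_mul_of_nonneg_left hxj hBij.le) hui.le
    have e2 : t * (B i j * u i) ≤ x j * (B j i * x i) := by
      rw [hxi, hBji]
      exact mul_le_mul hxj (le_refl _) (mul_nonneg hBij.le hui.le) (hxnn j)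
    linarith
  have htG : t * (|A j j| + 1) = γ * B i j * u i := by
    rw [htdef]; field_simp
  have habs : A j j ≤ |A j j| := le_abs_self _
  nlinarith [mul_pos (mul_pos hγ hBij) hui, sq_nonneg t, mul_pos ht0 ht0,
    mul_le_mul_of_nonneg_left hlow hγ.le]

theorem stmt14_aux {n : ℕ} (A : Matrix (Fin n) (Fin n) ℝ) (hA : Copositive A) :
    IrreducibleWrtSet A {B : Matrix (Fin n) (Fin n) ℝ | B.IsSymm ∧ ∀ i j, 0 ≤ B i j} ↔
      ∀ i j : Fin n, ∃ u, IsMinimalZeroOf A u ∧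
        A.mulVec u i = 0 ∧ A.mulVec u j = 0 ∧ 0 < u i + u j := by
  constructor
  · intro h i j
    have hEne : Eij i j ≠ 0 := by
      intro h0
      have h1 : Eij i j i j = 0 := by rw [h0]; rfl
      rw [show Eij i j i j = 1 from by simp [Eij]] at h1
      exact one_ne_zero h1
    have hcert : ∀ γ : ℝ, 0 < γ → ∃ x : Fin n → ℝ, (∀ l, 0 ≤ x l) ∧
        (∀ l, l ∉ (Finset.univ : Finset (Fin n)) → x l = 0) ∧
        x ⬝ᵥ A *ᵥ x - γ * (x ⬝ᵥ Eij i j *ᵥ x) < 0 := by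
      intro γ hγ
      have hnc : ¬ Copositive (A - γ • Eij i j) := fun hc =>
        h ⟨γ, hγ, Eij i j, ⟨Eij_isSymm, fun a b => Eij_nonneg⟩, hEne, hc⟩
      have hS : (A - γ • Eij i j).IsSymm := isSymm_sub_smul hA.1 Eij_isSymm γ
      have hP : ¬ ∀ x : Fin n → ℝ, (∀ l, 0 ≤ x l) → 0 ≤ x ⬝ᵥ (A - γ • Eij i j).mulVec x :=
        fun hp => hnc ⟨hS, hp⟩
      push_neg at hP
      obtain ⟨x, hx1, hx2⟩ := hP
      refine ⟨x, hx1, fun l hl => absurd (Finset.mem_univ l) hl, ?_⟩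
      rw [show (A - γ • Eij i j).mulVec x = (A - γ • Eij i j) *ᵥ x from rfl,
        quad_sub_smul] at hx2
      linarith
    obtain ⟨u, hu, hAi, hAj, hpos⟩ := key hA i j Finset.univ.card Finset.univ le_rfl
      (Finset.mem_univ i) (Finset.mem_univ j) hcert
    exact minref hA i j _ u le_rfl hu hAi hAj hpos
  · intro h
    rintro ⟨γ, hγ, B, ⟨hBs, hBnn⟩, hBne, hcop⟩
    obtain ⟨i, j, hBij⟩ : ∃ i j, B i j ≠ 0 := by
      by_contra hc
      push_neg at hc
      exact hBne (by ext a b; simp [hc a b])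
    have hBij' : 0 < B i j := lt_of_le_of_ne (hBnn i j) (Ne.symm hBij)
    obtain ⟨u, humin, hAi, hAj, hpos⟩ := h i j
    have hu := humin.1
    rcases eq_or_ne i j with hij | hij
    · subst hij
      have hui : 0 < u i := by linarith
      have h0 := hcop.2 u hu.2.1
      rw [show (A - γ • B).mulVec u = (A - γ • B) *ᵥ u from rfl, quad_sub_smul] at h0
      have hd := quad_diag_term hBnn hu.2.1 i
      have hq := hu.2.2
      have hqB : 0 < u ⬝ᵥ B *ᵥ u := by nlinarith [mul_pos (mul_pos hBij' hui) hui]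
      have := mul_pos hγ hqB
      rw [show u ⬝ᵥ A.mulVec u = u ⬝ᵥ A *ᵥ u from rfl] at hq
      linarith
    · rcases lt_or_ge 0 (u i) with hui | hui
      · exact (contra_aux hγ hBs hBnn hij hBij' hu hA.1 hAj hui hcop).elim
      · have huj : 0 < u j := by linarith [hu.2.1 i]
        have hBji' : 0 < B j i := by
          have h2 := congrFun (congrFun hBs j) i
          rw [transpose_apply] at h2
          rw [show B j i = B i j from h2.symm]
          exact hBij'
        exact (contra_aux hγ hBs hBnn hij.symm hBji' hu hA.1 hAi huj hcop).elim

theorem stmt14 {n : ℕ} (A : Matrix (Fin n) (Fin n) ℝ) (hA : Copositive A) :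
    IrreducibleWrtSet A {B : Matrix (Fin n) (Fin n) ℝ | B.IsSymm ∧ ∀ i j, 0 ≤ B i j} ↔
      ∀ i j : Fin n, ∃ u, IsMinimalZeroOf A u ∧
        A.mulVec u i = 0 ∧ A.mulVec u j = 0 ∧ 0 < u i + u j := by
  exact stmt14_aux A hA
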